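/- Let E := EuclideanSpace ℝ (Fin d), g ∈ E, L ≥ 0, and let v : ℝ → E → E be a velocity field such that for every t ∈ [0,1] the map v t is Lipschitz with constant L, and such that all the integrands below are measurable in the appropriate variables. Let μ₀ be a probability measure on E (the base Gaussian), and suppose that for each x₀ ∈ E there is a curve ψ(x₀, ·) : ℝ → E with ψ(x₀, 0) = x₀, with derivative (d/dt) ψ(x₀, t) = v(t, ψ(x₀, t)) for all t ∈ [0,1], with t ↦ v(t, (1−t)·x₀ + t·g) continuous on [0,1], and with x₀ ↦ ψ(x₀, 1) measurable. Let ν := Measure.map (fun x₀ => ψ(x₀,1)) μ₀ be the model distribution at time 1. Then the squared Wasserstein-2 distance from δ_g to ν, expressed as W₂²(δ_g, ν) = ∫⁻ ‖y − g‖² dν(y), satisfies W₂²(δ_g, ν) ≤ exp(2L) · ∫⁻_{x₀} ( ∫⁻_{t ∈ (0,1)} ‖v(t, (1−t)·x₀ + t·g) − (g − x₀)‖² dt ) dμ₀(x₀), i.e., the squared Wasserstein-2 distance is upper bounded, up to the multiplicative constant C = e^{2L}, by the mean squared error between the velocity field of the model and the target velocity x₁ − x₀ with x₁ = g, averaged over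 x₀ ∼ μ₀ and t ∼ Unif([0,1]). (Proposition 2 in explicit coupling/flow form.) -/

import Mathlib

open MeasureTheory Set

lemma key_bound {d : ℕ} (g x₀ : EuclideanSpace ℝ (Fin d)) (L : ℝ) (hL : 0 ≤ L)
    (v : ℝ → EuclideanSpace ℝ (Fin d) → EuclideanSpace ℝ (Fin d))
    (hlip : ∀ t ∈ Icc (0:ℝ) 1, LipschitzWith L.toNNReal (v t))
    (ψ : ℝ → EuclideanSpace ℝ (Fin d))
    (hψ0 : ψ 0 = x₀)
    (hderiv : ∀ t ∈ Icc (0:ℝ) 1, HasDerivAt ψ (v t (ψ t)) t)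
    (hcont : ContinuousOn (fun t : ℝ => v t ((1 - t) • x₀ + t • g)) (Icc (0:ℝ) 1))
    (herrmeas : AEStronglyMeasurable
      (fun t : ℝ => v t ((1 - t) • x₀ + t • g) - (g - x₀)) volume) :
    ‖ψ 1 - g‖ ^ 2 ≤ Real.exp (2 * L) *
      ∫ t in Ioo (0:ℝ) 1, ‖v t ((1 - t) • x₀ + t • g) - (g - x₀)‖ ^ 2 := by
  set φ : ℝ → EuclideanSpace ℝ (Fin d) := fun t => (1 - t) • x₀ + t • g with hφdef
  set err : ℝ → EuclideanSpace ℝ (Fin d) := fun t => v t (φ t) - (g - x₀) with herrdef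
  have herrc : ContinuousOn err (Icc (0:ℝ) 1) := hcont.sub continuousOn_const
  have hφ1 : φ 1 = g := by simp [hφdef]
  have hφ0 : φ 0 = x₀ := by simp [hφdef]
  have hφd : ∀ t : ℝ, HasDerivAt φ (g - x₀) t := by
    intro t
    have h1 : HasDerivAt (fun t : ℝ => (1 - t) • x₀) ((-1 : ℝ) • x₀) t :=
      ((hasDerivAt_id t).const_sub 1).smul_const x₀
    have h2 : HasDerivAt (fun t : ℝ => t • g) ((1 : ℝ) • g) t :=
      (hasDerivAt_id t).smul_const g
    have := h1.add h2
    simp only [neg_one_smul, one_smul] at this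
    rw [sub_eq_neg_add]
    exact this
  have hφc : Continuous φ := by fun_prop
  set I : ℝ → EuclideanSpace ℝ (Fin d) := fun t => ∫ s in (0:ℝ)..t, err s with hIdef
  set ε : ℝ → ℝ := fun t => ‖err t‖ with hεdef
  set Eint : ℝ := ∫ t in Ioo (0:ℝ) 1, ε t with hEdef
  have hεnn : ∀ t, 0 ≤ ε t := fun t => norm_nonneg _
  have hE0 : 0 ≤ Eint := setIntegral_nonneg measurableSet_Ioo fun _ _ => hεnn _
  have hεint : IntegrableOn ε (Ioo (0:ℝ) 1) :=
    (herrc.norm.integrableOn_Icc).mono_set Ioo_subset_Icc_self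
  -- bound on I
  have hI : ∀ t ∈ Icc (0:ℝ) 1, ‖I t‖ ≤ Eint := by
    intro t ht
    have h1 : ‖I t‖ ≤ ∫ s in (0:ℝ)..t, ‖err s‖ :=
      intervalIntegral.norm_integral_le_integral_norm ht.1
    have h2 : (∫ s in (0:ℝ)..t, ‖err s‖) = ∫ s in Ioc (0:ℝ) t, ε s :=
      intervalIntegral.integral_of_le ht.1
    have hne : ∀ᵐ x : ℝ, x ≠ 1 := by
      refine ae_iff.mpr ?_
      simp only [not_not, setOf_eq_eq_singleton]
      exact Real.volume_singleton
    have h3 : (∫ s in Ioc (0:ℝ) t, ε s) ≤ Eint := by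
      apply setIntegral_mono_set hεint
        (Filter.Eventually.of_forall fun s => hεnn s)
      exact hne.mono fun x hx hmem => ⟨hmem.1, lt_of_le_of_ne (hmem.2.trans ht.2) hx⟩
    linarith [h1, h2 ▸ h1]
  have herrInt : ∀ t : ℝ, t ∈ Icc (0:ℝ) 1 → IntervalIntegrable err volume 0 t := by
    intro t ht
    apply ContinuousOn.intervalIntegrable
    apply herrc.mono
    rw [uIcc_of_le ht.1]
    exact Icc_subset_Icc le_rfl ht.2
  have hIc : ContinuousOn I (Icc (0:ℝ) 1) := by
    have := intervalIntegral.continuousOn_primitive_interval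
      (f := err) (μ := volume) (a := (0:ℝ)) (b := 1)
      (by rw [uIcc_of_le zero_le_one]; exact herrc.integrableOn_Icc)
    rwa [uIcc_of_le zero_le_one] at this
  set F : ℝ → EuclideanSpace ℝ (Fin d) := fun t => ψ t - φ t - I t with hFdef
  have hψc : ContinuousOn ψ (Icc (0:ℝ) 1) := fun t ht =>
    ((hderiv t ht).continuousAt).continuousWithinAt
  have hFc : ContinuousOn F (Icc (0:ℝ) 1) := (hψc.sub hφc.continuousOn).sub hIc
  have hF' : ∀ t ∈ Ico (0:ℝ) 1,
      HasDerivWithinAt F (v t (ψ t) - (g - x₀) - err t) (Ici t) t := by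
    intro t ht
    have htIcc : t ∈ Icc (0:ℝ) 1 := Ico_subset_Icc_self ht
    have hId : HasDerivWithinAt I (err t) (Ici t) t := by
      apply intervalIntegral.integral_hasDerivWithinAt_right (herrInt t htIcc)
        ⟨univ, Filter.univ_mem, herrmeas.restrict⟩
      -- ContinuousWithinAt err (Ici t) t
      have hmem : Icc (0:ℝ) 1 ∈ nhdsWithin t (Ioi t) := by
        have h1 : Iic (1:ℝ) ∈ nhds t := Iic_mem_nhds ht.2
        have h2 : Iic (1:ℝ) ∈ nhdsWithin t (Ioi t) := mem_nhdsWithin_of_mem_nhds h1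
        filter_upwards [h2, self_mem_nhdsWithin] with x hx1 hx2
        exact ⟨le_trans ht.1 (le_of_lt hx2), hx1⟩
      exact (herrc t htIcc).mono_left (nhdsWithin_le_of_mem hmem)
    exact (((hderiv t htIcc).hasDerivWithinAt).sub
      ((hφd t).hasDerivWithinAt)).sub hId
  have hbound : ∀ t ∈ Ico (0:ℝ) 1,
      ‖v t (ψ t) - (g - x₀) - err t‖ ≤ L * ‖F t‖ + L * Eint := by
    intro t ht
    have htIcc : t ∈ Icc (0:ℝ) 1 := Ico_subset_Icc_self ht
    have heq : v t (ψ t) - (g - x₀) - err t = v t (ψ t) - v t (φ t) := by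
      simp only [herrdef]; abel
    rw [heq]
    have hlip' : ‖v t (ψ t) - v t (φ t)‖ ≤ L * ‖ψ t - φ t‖ := by
      have := (hlip t htIcc).dist_le_mul (ψ t) (φ t)
      rwa [dist_eq_norm, dist_eq_norm, Real.coe_toNNReal L hL] at this
    have hsplit : ψ t - φ t = F t + I t := by simp only [hFdef]; abel
    calc ‖v t (ψ t) - v t (φ t)‖ ≤ L * ‖ψ t - φ t‖ := hlip'
      _ = L * ‖F t + I t‖ := by rw [hsplit]
      _ ≤ L * (‖F t‖ + ‖I t‖) :=
          mul_le_mul_of_nonneg_left (norm_add_le _ _) hL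
      _ ≤ L * (‖F t‖ + Eint) :=
          mul_le_mul_of_nonneg_left (by linarith [hI t htIcc]) hL
      _ = L * ‖F t‖ + L * Eint := by ring
  have hF0 : ‖F 0‖ ≤ 0 := by
    simp [hFdef, hIdef, hψ0, hφ0, intervalIntegral.integral_same]
  have hgr := norm_le_gronwallBound_of_norm_deriv_right_le hFc hF' hF0 hbound 1
    ⟨zero_le_one, le_rfl⟩
  have hgB : gronwallBound 0 L (L * Eint) (1 - 0) ≤ Eint * (Real.exp L - 1) := by
    rcases eq_or_lt_of_le hL with h0 | h0
    · rw [← h0]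
      simp [gronwallBound_K0]
    · apply le_of_eq
      rw [gronwallBound_of_K_ne_0 (ne_of_gt h0)]
      have hLne : L ≠ 0 := ne_of_gt h0
      field_simp
      simp
  have hF1 : ‖F 1‖ ≤ Eint * (Real.exp L - 1) := le_trans hgr hgB
  have hψ1 : ψ 1 - g = F 1 + I 1 := by
    simp only [hFdef, hφ1]; abel
  have h1 : ‖ψ 1 - g‖ ≤ Eint * Real.exp L := by
    rw [hψ1]
    calc ‖F 1 + I 1‖ ≤ ‖F 1‖ + ‖I 1‖ := norm_add_le _ _
      _ ≤ Eint * (Real.exp L - 1) + Eint := by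
          linarith [hI 1 ⟨zero_le_one, le_rfl⟩]
      _ = Eint * Real.exp L := by ring
  have h2 : ‖ψ 1 - g‖ ^ 2 ≤ Real.exp (2 * L) * Eint ^ 2 := by
    have := pow_le_pow_left₀ (norm_nonneg _) h1 2
    calc ‖ψ 1 - g‖ ^ 2 ≤ (Eint * Real.exp L) ^ 2 := this
      _ = Real.exp (2 * L) * Eint ^ 2 := by
          rw [mul_pow, two_mul, Real.exp_add]; ring
  -- Cauchy-Schwarz / Jensen : Eint ^ 2 ≤ ∫ ε ^ 2
  have hε2int : IntegrableOn (fun t => ε t ^ 2) (Ioo (0:ℝ) 1) :=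
    ((herrc.norm.pow 2).integrableOn_Icc).mono_set Ioo_subset_Icc_self
  haveI : IsProbabilityMeasure (volume.restrict (Ioo (0:ℝ) 1)) :=
    ⟨by simp [Real.volume_Ioo]⟩
  have hjensen : Eint ^ 2 ≤ ∫ t in Ioo (0:ℝ) 1, ε t ^ 2 := by
    have hvar : 0 ≤ ∫ t in Ioo (0:ℝ) 1, (ε t - Eint) ^ 2 :=
      integral_nonneg fun t => sq_nonneg _
    have hexpand : (∫ t in Ioo (0:ℝ) 1, (ε t - Eint) ^ 2)
        = (∫ t in Ioo (0:ℝ) 1, ε t ^ 2) - Eint ^ 2 := by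
      have heq : ∀ t : ℝ, (ε t - Eint) ^ 2
          = (ε t ^ 2 - (2 * Eint) * ε t) + Eint ^ 2 := fun t => by ring
      simp_rw [heq]
      have int1 : Integrable (fun t => ε t ^ 2 - 2 * Eint * ε t)
          (volume.restrict (Ioo (0:ℝ) 1)) := hε2int.sub (hεint.const_mul _)
      rw [integral_add int1 (integrable_const _),
        integral_sub hε2int (hεint.const_mul _), integral_const_mul,
        integral_const]
      simp only [measure_univ, probReal_univ, ENNReal.toReal_one, smul_eq_mul, one_mul]
      rw [← hEdef]
      ring
    linarith [hexpand ▸ hvar]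
  calc ‖ψ 1 - g‖ ^ 2 ≤ Real.exp (2 * L) * Eint ^ 2 := h2
    _ ≤ Real.exp (2 * L) * ∫ t in Ioo (0:ℝ) 1, ε t ^ 2 :=
        mul_le_mul_of_nonneg_left hjensen (Real.exp_nonneg _)

/-- Proposition 2 (explicit coupling/flow form): the squared Wasserstein-2
distance `W₂²(δ_g, ν) = ∫⁻ ‖y − g‖² dν` from the goal Dirac to the model
distribution `ν = (ψ(·,1))_* μ₀` at time 1 of the flow of the velocity field
`v` is bounded by `e^{2L}` times the mean squared error between `v` along the
linear interpolation path and the target velocity `g − x₀`, averaged over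
`x₀ ∼ μ₀` and `t ∼ Unif([0,1])`. -/
theorem wasserstein_le_flow_matching_mse {d : ℕ}
    (g : EuclideanSpace ℝ (Fin d)) (L : ℝ) (hL : 0 ≤ L)
    (v : ℝ → EuclideanSpace ℝ (Fin d) → EuclideanSpace ℝ (Fin d))
    (hlip : ∀ t ∈ Set.Icc (0 : ℝ) 1, LipschitzWith L.toNNReal (v t))
    (hvmeas : Measurable fun p : ℝ × EuclideanSpace ℝ (Fin d) => v p.1 p.2)
    (μ₀ : Measure (EuclideanSpace ℝ (Fin d))) (hμ₀ : IsProbabilityMeasure μ₀)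
    (ψ : EuclideanSpace ℝ (Fin d) → ℝ → EuclideanSpace ℝ (Fin d))
    (hψ0 : ∀ x₀, ψ x₀ 0 = x₀)
    (hderiv : ∀ x₀, ∀ t ∈ Set.Icc (0 : ℝ) 1, HasDerivAt (ψ x₀) (v t (ψ x₀ t)) t)
    (hcont : ∀ x₀, ContinuousOn
      (fun t : ℝ => v t ((1 - t) • x₀ + t • g)) (Set.Icc (0 : ℝ) 1))
    (hψmeas : Measurable fun x₀ => ψ x₀ 1)
    (ν : Measure (EuclideanSpace ℝ (Fin d)))
    (hν : ν = Measure.map (fun x₀ => ψ x₀ 1) μ₀) :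
    (∫⁻ y, ENNReal.ofReal (‖y - g‖ ^ 2) ∂ν)
      ≤ ENNReal.ofReal (Real.exp (2 * L)) *
        ∫⁻ x₀, (∫⁻ t in Set.Ioo (0 : ℝ) 1,
          ENNReal.ofReal (‖v t ((1 - t) • x₀ + t • g) - (g - x₀)‖ ^ 2)) ∂μ₀ := by
  have hfmeas : Measurable fun y : EuclideanSpace ℝ (Fin d) =>
      ENNReal.ofReal (‖y - g‖ ^ 2) :=
    (((measurable_id.sub measurable_const).norm).pow_const 2).ennreal_ofReal
  have herrmeas : ∀ x₀ : EuclideanSpace ℝ (Fin d), AEStronglyMeasurable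
      (fun t : ℝ => v t ((1 - t) • x₀ + t • g) - (g - x₀)) volume := by
    intro x₀
    apply Measurable.aestronglyMeasurable
    have hpath : Measurable fun t : ℝ => ((1 - t) • x₀ + t • g :
        EuclideanSpace ℝ (Fin d)) := by fun_prop
    exact (hvmeas.comp (measurable_id.prodMk hpath)).sub measurable_const
  rw [hν, lintegral_map hfmeas hψmeas,
    ← lintegral_const_mul' _ _ ENNReal.ofReal_ne_top]
  apply lintegral_mono
  intro x₀
  have hkey := key_bound g x₀ L hL v hlip (ψ x₀) (hψ0 x₀) (hderiv x₀) (hcont x₀)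
    (herrmeas x₀)
  have hε2int : IntegrableOn
      (fun t : ℝ => ‖v t ((1 - t) • x₀ + t • g) - (g - x₀)‖ ^ 2)
      (Set.Ioo (0:ℝ) 1) volume :=
    ((((hcont x₀).sub continuousOn_const).norm.pow 2).integrableOn_Icc).mono_set
      Set.Ioo_subset_Icc_self
  calc ENNReal.ofReal (‖ψ x₀ 1 - g‖ ^ 2)
      ≤ ENNReal.ofReal (Real.exp (2 * L) *
          ∫ t in Set.Ioo (0:ℝ) 1,
            ‖v t ((1 - t) • x₀ + t • g) - (g - x₀)‖ ^ 2) :=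
        ENNReal.ofReal_le_ofReal hkey
    _ = ENNReal.ofReal (Real.exp (2 * L)) *
          ENNReal.ofReal (∫ t in Set.Ioo (0:ℝ) 1,
            ‖v t ((1 - t) • x₀ + t • g) - (g - x₀)‖ ^ 2) :=
        ENNReal.ofReal_mul (le_of_lt (Real.exp_pos _))
    _ ≤ ENNReal.ofReal (Real.exp (2 * L)) *
          ∫⁻ t in Set.Ioo (0:ℝ) 1,
            ENNReal.ofReal (‖v t ((1 - t) • x₀ + t • g) - (g - x₀)‖ ^ 2) := by
        apply mul_le_mul_right
        rw [ofReal_integral_eq_lintegral_ofReal hε2int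
          (Filter.Eventually.of_forall fun t => sq_nonneg _)]
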